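/- For every information set I of player i and every action a ∈ A(I), the baseline-enhanced counterfactual value estimate has the same expectation as the original outcome-sampling counterfactual value estimate: E_{z∼ξ}[v̂_i^b(σ,I,a|z)] = E_{z∼ξ}[ṽ_i(σ,I,a|z)]. -/

import Mathlib

open Finset

variable {A : Type*} [Fintype A] [DecidableEq A]

/-- The set of legal actions at history `h`: those `a` with `h ++ [a] ∈ H`. -/
def legal (H : Finset (List A)) (h : List A) : Finset A :=
  Finset.univ.filter fun a => h ++ [a] ∈ H

/-- Product of `f (h', a)` over all prefix steps `h'·a ⊑ h` of the history `h`.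
With `f = ξ` this is the sampling probability `q(h)`; note `pathProd f [] = 1`. -/
def pathProd (f : List A → A → ℝ) (h : List A) : ℝ :=
  ∏ k : Fin h.length, f (h.take (k : ℕ)) (h.get k)

/-- `π^σ(h, z)`: product of `σ (h', a)` over all prefix steps `h'·a` with `h ⊏ h'·a ⊑ z`. -/
def sfxProd (σ : List A → A → ℝ) (h z : List A) : ℝ :=
  ∏ k : Fin z.length, if h.length ≤ (k : ℕ) then σ (z.take (k : ℕ)) (z.get k) else 1

/-- `π^σ_{-i}(h)`: product of `σ (h', a)` over all prefix steps `h'·a ⊑ h` with `τ h' ≠ i`. -/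
def oppProd {N : Type*} [DecidableEq N] (σ : List A → A → ℝ) (τ : List A → N) (i : N)
    (h : List A) : ℝ :=
  ∏ k : Fin h.length, if τ (h.take (k : ℕ)) ≠ i then σ (h.take (k : ℕ)) (h.get k) else 1

/-- The expected value `u_i^σ(h) = Σ_{z ∈ Z, h ⊑ z} π^σ(h,z)·u_i(z)`. -/
def expUtil (σ : List A → A → ℝ) (u : List A → ℝ) (Z : Finset (List A)) (h : List A) : ℝ :=
  ∑ z ∈ Z.filter (fun z => h <+: z), sfxProd σ h z * u z

/-- The plain sampled history value `û_i(σ, h | z)`: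
`u_i(h)` if `h = z`, `Σ_{a ∈ A(h)} σ(h,a)·û_i(σ,h,a|z)` if `h ⊏ z`, and `0` otherwise,
where `û_i(σ,h,a|z) = û_i(σ,h·a|z)/ξ(h,a)` if `h·a ⊑ z` and `0` otherwise. -/
noncomputable def uhat (ξ σ : List A → A → ℝ) (u : List A → ℝ) (H : Finset (List A))
    (z : List A) (h : List A) : ℝ :=
  if h = z then u z
  else if h <+: z then
    ∑ a ∈ legal H h, σ h a *
      (if hpa : h ++ [a] <+: z then uhat ξ σ u H z (h ++ [a]) / ξ h a else 0)
  else 0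
termination_by z.length - h.length
decreasing_by
  have := hpa.length_le
  simp only [List.length_append, List.length_singleton] at this ⊢
  omega

/-- The plain sampled history-action value `û_i(σ, h, a | z)`. -/
noncomputable def uhatA (ξ σ : List A → A → ℝ) (u : List A → ℝ) (H : Finset (List A))
    (z : List A) (h : List A) (a : A) : ℝ :=
  if h ++ [a] <+: z then uhat ξ σ u H z (h ++ [a]) / ξ h a else 0

/-- The baseline-enhanced sampled history value `û_i^b(σ, h | z)`:
`u_i(h)` if `h = z`, `Σ_{a ∈ A(h)} σ(h,a)·û_i^b(σ,h,a|z)` if `h ⊏ z`, and `0` otherwise,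
where `û_i^b(σ,h,a|z) = b(h,a) + (û_i^b(σ,h·a|z) − b(h,a))/ξ(h,a)` if `h·a ⊑ z`,
`b(h,a)` if `h ⊏ z` and `h·a ⋢ z`, and `0` otherwise. -/
noncomputable def uhatB (ξ σ : List A → A → ℝ) (u : List A → ℝ) (H : Finset (List A))
    (b : List A → A → ℝ) (z : List A) (h : List A) : ℝ :=
  if h = z then u z
  else if h <+: z then
    ∑ a ∈ legal H h, σ h a *
      (if hpa : h ++ [a] <+: z then b h a + (uhatB ξ σ u H b z (h ++ [a]) - b h a) / ξ h a
       else b h a)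
  else 0
termination_by z.length - h.length
decreasing_by
  have := hpa.length_le
  simp only [List.length_append, List.length_singleton] at this ⊢
  omega

/-- The baseline-enhanced sampled history-action value `û_i^b(σ, h, a | z)`. -/
noncomputable def uhatBA (ξ σ : List A → A → ℝ) (u : List A → ℝ) (H : Finset (List A))
    (b : List A → A → ℝ) (z : List A) (h : List A) (a : A) : ℝ :=
  if h ++ [a] <+: z then b h a + (uhatB ξ σ u H b z (h ++ [a]) - b h a) / ξ h a
  else if h <+: z ∧ h ≠ z then b h a
  else 0


section Aux

set_option linter.unusedSectionVars false

lemma pathProd_nil (f : List A → A → ℝ) : pathProd f [] = 1 := by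
  simp [pathProd]

lemma pathProd_snoc (f : List A → A → ℝ) (h : List A) (a : A) :
    pathProd f (h ++ [a]) = pathProd f h * f h a := by
  have hl : h.length + 1 = (h ++ [a]).length := by simp
  unfold pathProd
  rw [← Fin.prod_congr' _ hl, Fin.prod_univ_castSucc]
  congr 1
  · apply Finset.prod_congr rfl
    intro k _
    have hk : (k : ℕ) < h.length := k.isLt
    have ht : (h ++ [a]).take (k : ℕ) = h.take (k : ℕ) := by
      simp [List.take_append, Nat.sub_eq_zero_of_le (le_of_lt hk)]
    have hg : (h ++ [a])[(k : ℕ)]'(by simp) = h[(k : ℕ)] :=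
      List.getElem_append_left hk
    simp [List.get_eq_getElem, ht, hg]
  · have ht : (h ++ [a]).take h.length = h := List.take_left
    have hg : (h ++ [a])[h.length]'(by simp) = a := by
      rw [List.getElem_append_right (le_refl h.length)]
      simp
    simp [List.get_eq_getElem, Fin.last, ht, hg]

lemma sfxProd_self (σ : List A → A → ℝ) (g : List A) : sfxProd σ g g = 1 := by
  unfold sfxProd
  exact Finset.prod_eq_one fun k _ => if_neg (by omega)

lemma sfxProd_cons (σ : List A → A → ℝ) {g z : List A} {a : A} (hp : g ++ [a] <+: z) :
    sfxProd σ g z = σ g a * sfxProd σ (g ++ [a]) z := by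
  obtain ⟨t, ht⟩ := hp
  have hz : z = g ++ (a :: t) := by rw [← ht]; simp
  subst hz
  have hlt : g.length < (g ++ (a :: t)).length := by simp
  set j : Fin (g ++ (a :: t)).length := ⟨g.length, hlt⟩ with hj
  have htake : (g ++ (a :: t)).take g.length = g := List.take_left
  have hget : (g ++ (a :: t))[(j : ℕ)]'(j.isLt) = a := by
    rw [List.getElem_append_right (le_refl g.length)]
    simp
  unfold sfxProd
  rw [← Finset.mul_prod_erase Finset.univ _ (Finset.mem_univ j),
      ← Finset.mul_prod_erase Finset.univ
        (fun k : Fin (g ++ (a :: t)).length =>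
          if (g ++ [a]).length ≤ (k : ℕ) then σ ((g ++ (a::t)).take (k : ℕ)) ((g ++ (a::t)).get k)
          else 1)
        (Finset.mem_univ j)]
  have h1 : (if g.length ≤ (j:ℕ) then σ ((g ++ (a::t)).take (j:ℕ)) ((g ++ (a::t)).get j) else 1)
      = σ g a := by
    rw [if_pos (le_refl _)]
    simp [List.get_eq_getElem, htake, hget]
    exact congrArg (fun l => σ l a) htake
  have h2 : (if (g ++ [a]).length ≤ (j:ℕ) then σ ((g ++ (a::t)).take (j:ℕ)) ((g ++ (a::t)).get j)
      else 1) = 1 := by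
    rw [if_neg (by simp; exact le_refl _)]
  rw [h1, h2, one_mul]
  congr 1
  apply Finset.prod_congr rfl
  intro k hk
  have hkj : (k : ℕ) ≠ g.length := by
    intro hc
    exact (Finset.mem_erase.mp hk).1 (Fin.ext hc)
  have hiff : (g.length ≤ (k : ℕ)) ↔ ((g ++ [a]).length ≤ (k : ℕ)) := by simp; omega
  by_cases hc : g.length ≤ (k : ℕ)
  · rw [if_pos hc, if_pos (hiff.mp hc)]
  · rw [if_neg hc, if_neg (fun h => hc (hiff.mpr h))]

lemma oppProd_snoc {N : Type*} [DecidableEq N] (σ : List A → A → ℝ) (τ : List A → N) (i : N)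
    (h : List A) (a : A) :
    oppProd σ τ i (h ++ [a]) = oppProd σ τ i h * (if τ h ≠ i then σ h a else 1) := by
  have he : ∀ g : List A, oppProd σ τ i g
      = pathProd (fun h' a' => if τ h' ≠ i then σ h' a' else 1) g := fun g => rfl
  rw [he, he, pathProd_snoc]

lemma mem_legal_iff {H : Finset (List A)} {h : List A} {a : A} :
    a ∈ legal H h ↔ h ++ [a] ∈ H := by
  simp [legal]

section Game

variable (H Z : Finset (List A))
    (hclosed : ∀ h ∈ H, ∀ h' : List A, h' <+: h → h' ∈ H)
    (hZH : Z ⊆ H)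
    (hreach : ∀ h ∈ H, ∃ z ∈ Z, h <+: z)
    (hterm : ∀ z ∈ Z, ∀ h ∈ H, z <+: h → z = h)

include hZH hterm in
lemma filter_terminal {g : List A} (hgZ : g ∈ Z) :
    Z.filter (fun z => g <+: z) = {g} := by
  ext z
  simp only [Finset.mem_filter, Finset.mem_singleton]
  constructor
  · rintro ⟨hz, hp⟩
    exact (hterm g hgZ z (hZH hz) hp).symm
  · rintro rfl
    exact ⟨hgZ, List.prefix_refl z⟩

include hclosed hZH in
lemma partitionZ {g : List A} (hgZ : g ∉ Z) (F : List A → ℝ) :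
    ∑ z ∈ Z.filter (fun z => g <+: z), F z
      = ∑ a ∈ legal H g, ∑ z ∈ Z.filter (fun z => g ++ [a] <+: z), F z := by
  have hset : Z.filter (fun z => g <+: z)
      = (legal H g).biUnion (fun a => Z.filter (fun z => g ++ [a] <+: z)) := by
    ext z
    simp only [Finset.mem_filter, Finset.mem_biUnion]
    constructor
    · rintro ⟨hz, hp⟩
      have hne : g ≠ z := by rintro rfl; exact hgZ hz
      have hlt : g.length < z.length := by
        rcases lt_or_eq_of_le hp.length_le with h | h
        · exact h
        · exact absurd (List.IsPrefix.eq_of_length hp h) hne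
      refine ⟨z[g.length], ?_, hz, ?_⟩
      · rw [mem_legal_iff]
        refine hclosed z (hZH hz) _ ?_
        have : g = z.take g.length := List.prefix_iff_eq_take.mp hp
        calc g ++ [z[g.length]] = (z.take g.length).concat z[g.length] := by
              rw [← this]; simp [List.concat_eq_append]
          _ = z.take (g.length + 1) := List.take_concat_get hlt
          _ <+: z := List.take_prefix _ z
      · have hgt : g = z.take g.length := List.prefix_iff_eq_take.mp hp
        calc g ++ [z[g.length]] = (z.take g.length).concat z[g.length] := by
              rw [← hgt]; simp [List.concat_eq_append]
          _ = z.take (g.length + 1) := List.take_concat_get hlt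
          _ <+: z := List.take_prefix _ z
    · rintro ⟨a, _, hz, hp⟩
      exact ⟨hz, (List.prefix_append g [a]).trans hp⟩
  rw [hset]
  apply Finset.sum_biUnion
  intro a _ a' _ hne
  simp only [Function.onFun, Finset.disjoint_left, Finset.mem_filter]
  rintro z ⟨hz, hp⟩ ⟨_, hp'⟩
  apply hne
  have hlen : (g ++ [a]).length = (g ++ [a']).length := by simp
  have := List.IsPrefix.eq_of_length (List.prefix_of_prefix_length_le hp hp' hlen.le) hlen
  have := List.append_cancel_left this
  simpa using this

variable (ξ : List A → A → ℝ)
    (hξpos : ∀ h ∈ H, h ∉ Z → ∀ a ∈ legal H h, 0 < ξ h a)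
    (hξsum : ∀ h ∈ H, h ∉ Z → ∑ a ∈ legal H h, ξ h a = 1)

include hclosed hterm hξpos in
lemma pathProd_pos : ∀ h ∈ H, 0 < pathProd ξ h := by
  intro h
  induction h using List.reverseRecOn with
  | nil => intro _; rw [pathProd_nil]; norm_num
  | append_singleton h a ih =>
    intro hmem
    have hhH : h ∈ H := hclosed _ hmem h (List.prefix_append h [a])
    have hhZ : h ∉ Z := fun hz => by
      have := hterm h hz (h ++ [a]) hmem (List.prefix_append h [a])
      simp at this
    have ha : a ∈ legal H h := mem_legal_iff.mpr hmem
    rw [pathProd_snoc]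
    exact mul_pos (ih hhH) (hξpos h hhH hhZ a ha)

include hclosed hZH hreach hterm hξsum in
lemma massAux : ∀ n : ℕ, ∀ g ∈ H, (∀ z ∈ Z, z.length ≤ g.length + n) →
    ∑ z ∈ Z.filter (fun z => g <+: z), pathProd ξ z = pathProd ξ g := by
  intro n
  induction n with
  | zero =>
    intro g hgH hb
    by_cases hgZ : g ∈ Z
    · rw [filter_terminal H Z hZH hterm hgZ, Finset.sum_singleton]
    · exfalso
      obtain ⟨z, hz, hp⟩ := hreach g hgH
      have h1 : z.length ≤ g.length := by have := hb z hz; omega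
      exact hgZ (List.IsPrefix.eq_of_length hp (le_antisymm hp.length_le h1) ▸ hz)
  | succ n ih =>
    intro g hgH hb
    by_cases hgZ : g ∈ Z
    · rw [filter_terminal H Z hZH hterm hgZ, Finset.sum_singleton]
    · rw [partitionZ H Z hclosed hZH hgZ]
      have : ∀ a ∈ legal H g,
          ∑ z ∈ Z.filter (fun z => g ++ [a] <+: z), pathProd ξ z = pathProd ξ g * ξ g a := by
        intro a ha
        rw [ih (g ++ [a]) (mem_legal_iff.mp ha)
            (fun z hz => by have := hb z hz; simp; omega), pathProd_snoc]
      rw [Finset.sum_congr rfl this, ← Finset.mul_sum, hξsum g hgH hgZ, mul_one]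

include hclosed hZH in
lemma expUtil_rec (σ : List A → A → ℝ) (u : List A → ℝ) {g : List A} (hgZ : g ∉ Z) :
    expUtil σ u Z g = ∑ a ∈ legal H g, σ g a * expUtil σ u Z (g ++ [a]) := by
  unfold expUtil
  rw [partitionZ H Z hclosed hZH hgZ (fun z => sfxProd σ g z * u z)]
  refine Finset.sum_congr rfl fun a _ => ?_
  rw [Finset.mul_sum]
  refine Finset.sum_congr rfl fun z hz => ?_
  rw [sfxProd_cons σ (Finset.mem_filter.mp hz).2]
  ring

end Game

lemma uhatB_self (ξ σ : List A → A → ℝ) (u : List A → ℝ) (H : Finset (List A))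
    (b : List A → A → ℝ) (z : List A) : uhatB ξ σ u H b z z = u z := by
  rw [uhatB]; simp

lemma uhatB_ne (ξ σ : List A → A → ℝ) (u : List A → ℝ) (H : Finset (List A))
    (b : List A → A → ℝ) {z g : List A} (hne : g ≠ z) (hp : g <+: z) :
    uhatB ξ σ u H b z g = ∑ a ∈ legal H g, σ g a *
      (if g ++ [a] <+: z then b g a + (uhatB ξ σ u H b z (g ++ [a]) - b g a) / ξ g a
       else b g a) := by
  rw [uhatB, if_neg hne, if_pos hp]
  simp only [dite_eq_ite]

lemma unbiasedAux (H Z : Finset (List A))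
    (hclosed : ∀ h ∈ H, ∀ h' : List A, h' <+: h → h' ∈ H)
    (hZH : Z ⊆ H)
    (hreach : ∀ h ∈ H, ∃ z ∈ Z, h <+: z)
    (hterm : ∀ z ∈ Z, ∀ h ∈ H, z <+: h → z = h)
    (ξ : List A → A → ℝ)
    (hξpos : ∀ h ∈ H, h ∉ Z → ∀ a ∈ legal H h, 0 < ξ h a)
    (hξsum : ∀ h ∈ H, h ∉ Z → ∑ a ∈ legal H h, ξ h a = 1)
    (σ : List A → A → ℝ) (u : List A → ℝ) (b : List A → A → ℝ) :
    ∀ n : ℕ, ∀ g ∈ H, (∀ z ∈ Z, z.length ≤ g.length + n) →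
    ∑ z ∈ Z.filter (fun z => g <+: z), pathProd ξ z * uhatB ξ σ u H b z g
      = pathProd ξ g * expUtil σ u Z g := by
  have hTerm : ∀ g ∈ Z,
      ∑ z ∈ Z.filter (fun z => g <+: z), pathProd ξ z * uhatB ξ σ u H b z g
        = pathProd ξ g * expUtil σ u Z g := by
    intro g hgZ
    rw [filter_terminal H Z hZH hterm hgZ, Finset.sum_singleton, uhatB_self]
    unfold expUtil
    rw [filter_terminal H Z hZH hterm hgZ, Finset.sum_singleton, sfxProd_self, one_mul]
  intro n
  induction n with
  | zero =>
    intro g hgH hb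
    by_cases hgZ : g ∈ Z
    · exact hTerm g hgZ
    · exfalso
      obtain ⟨z, hz, hp⟩ := hreach g hgH
      have h1 : z.length ≤ g.length := by have := hb z hz; omega
      exact hgZ (List.IsPrefix.eq_of_length hp (le_antisymm hp.length_le h1) ▸ hz)
  | succ n ih =>
    intro g hgH hb
    by_cases hgZ : g ∈ Z
    · exact hTerm g hgZ
    · calc ∑ z ∈ Z.filter (fun z => g <+: z), pathProd ξ z * uhatB ξ σ u H b z g
          = ∑ z ∈ Z.filter (fun z => g <+: z), ∑ a ∈ legal H g,
              σ g a * (pathProd ξ z *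
                (if g ++ [a] <+: z then
                    b g a + (uhatB ξ σ u H b z (g ++ [a]) - b g a) / ξ g a
                  else b g a)) := by
            refine Finset.sum_congr rfl fun z hz => ?_
            obtain ⟨hz1, hz2⟩ := Finset.mem_filter.mp hz
            have hne : g ≠ z := fun h => hgZ (h ▸ hz1)
            rw [uhatB_ne ξ σ u H b hne hz2, Finset.mul_sum]
            exact Finset.sum_congr rfl fun a _ => by ring
        _ = ∑ a ∈ legal H g, ∑ z ∈ Z.filter (fun z => g <+: z),
              σ g a * (pathProd ξ z *
                (if g ++ [a] <+: z then
                    b g a + (uhatB ξ σ u H b z (g ++ [a]) - b g a) / ξ g a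
                  else b g a)) := Finset.sum_comm
        _ = ∑ a ∈ legal H g, σ g a * (pathProd ξ g * expUtil σ u Z (g ++ [a])) := by
            refine Finset.sum_congr rfl fun a ha => ?_
            have hme : g ++ [a] ∈ H := mem_legal_iff.mp ha
            have hxa : 0 < ξ g a := hξpos g hgH hgZ a ha
            have hsub : (Z.filter (fun z => g <+: z)).filter (fun z => g ++ [a] <+: z)
                = Z.filter (fun z => g ++ [a] <+: z) := by
              ext z
              simp only [Finset.mem_filter]
              constructor
              · rintro ⟨⟨h1, _⟩, h3⟩; exact ⟨h1, h3⟩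
              · rintro ⟨h1, h3⟩; exact ⟨⟨h1, (List.prefix_append g [a]).trans h3⟩, h3⟩
            have hmass : ∑ z ∈ Z.filter (fun z => g <+: z), pathProd ξ z = pathProd ξ g :=
              massAux H Z hclosed hZH hreach hterm ξ hξsum (n + 1) g hgH hb
            have hmassa : ∑ z ∈ Z.filter (fun z => g ++ [a] <+: z), pathProd ξ z
                = pathProd ξ g * ξ g a := by
              rw [massAux H Z hclosed hZH hreach hterm ξ hξsum n (g ++ [a]) hme
                  (fun z hz => by have := hb z hz; simp; omega), pathProd_snoc]
            have hIH : ∑ z ∈ Z.filter (fun z => g ++ [a] <+: z),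
                pathProd ξ z * uhatB ξ σ u H b z (g ++ [a])
                  = pathProd ξ g * ξ g a * expUtil σ u Z (g ++ [a]) := by
              rw [ih (g ++ [a]) hme (fun z hz => by have := hb z hz; simp; omega),
                  pathProd_snoc]
            rw [← Finset.mul_sum]
            congr 1
            calc ∑ z ∈ Z.filter (fun z => g <+: z),
                  pathProd ξ z *
                    (if g ++ [a] <+: z then
                        b g a + (uhatB ξ σ u H b z (g ++ [a]) - b g a) / ξ g a
                      else b g a)
                = ∑ z ∈ Z.filter (fun z => g <+: z),
                    (pathProd ξ z * b g a +
                      (if g ++ [a] <+: z then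
                          (pathProd ξ z * uhatB ξ σ u H b z (g ++ [a])
                            - pathProd ξ z * b g a) / ξ g a
                        else 0)) := by
                  refine Finset.sum_congr rfl fun z _ => ?_
                  by_cases hc : g ++ [a] <+: z
                  · rw [if_pos hc, if_pos hc]; ring
                  · rw [if_neg hc, if_neg hc, add_zero]
              _ = pathProd ξ g * b g a +
                    (pathProd ξ g * ξ g a * expUtil σ u Z (g ++ [a])
                      - pathProd ξ g * ξ g a * b g a) / ξ g a := by
                  rw [Finset.sum_add_distrib, ← Finset.sum_mul, hmass,
                    ← Finset.sum_filter, hsub, ← Finset.sum_div, Finset.sum_sub_distrib,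
                    hIH, ← Finset.sum_mul, hmassa]
              _ = pathProd ξ g * expUtil σ u Z (g ++ [a]) := by
                  field_simp
                  ring
        _ = pathProd ξ g * expUtil σ u Z g := by
            rw [expUtil_rec H Z hclosed hZH σ u hgZ, Finset.mul_sum]
            exact Finset.sum_congr rfl fun a _ => by ring

lemma sum_uhatBA (H Z : Finset (List A))
    (hclosed : ∀ h ∈ H, ∀ h' : List A, h' <+: h → h' ∈ H)
    (hZH : Z ⊆ H)
    (hreach : ∀ h ∈ H, ∃ z ∈ Z, h <+: z)
    (hterm : ∀ z ∈ Z, ∀ h ∈ H, z <+: h → z = h)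
    (ξ : List A → A → ℝ)
    (hξpos : ∀ h ∈ H, h ∉ Z → ∀ a ∈ legal H h, 0 < ξ h a)
    (hξsum : ∀ h ∈ H, h ∉ Z → ∑ a ∈ legal H h, ξ h a = 1)
    (σ : List A → A → ℝ) (u : List A → ℝ) (b : List A → A → ℝ)
    {g : List A} (hgH : g ∈ H) (hgZ : g ∉ Z) {a : A} (ha : a ∈ legal H g) :
    ∑ z ∈ Z.filter (fun z => g <+: z), pathProd ξ z * uhatBA ξ σ u H b z g a
      = pathProd ξ g * expUtil σ u Z (g ++ [a]) := by
  set n := Z.sup List.length with hn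
  have hbnd : ∀ g' : List A, ∀ z ∈ Z, z.length ≤ g'.length + n := fun g' z hz =>
    le_trans (Finset.le_sup (f := List.length) hz) (Nat.le_add_left _ _)
  have hme : g ++ [a] ∈ H := mem_legal_iff.mp ha
  have hxa : 0 < ξ g a := hξpos g hgH hgZ a ha
  have hsub : (Z.filter (fun z => g <+: z)).filter (fun z => g ++ [a] <+: z)
      = Z.filter (fun z => g ++ [a] <+: z) := by
    ext z
    simp only [Finset.mem_filter]
    constructor
    · rintro ⟨⟨h1, _⟩, h3⟩; exact ⟨h1, h3⟩
    · rintro ⟨h1, h3⟩; exact ⟨⟨h1, (List.prefix_append g [a]).trans h3⟩, h3⟩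
  have hmass : ∑ z ∈ Z.filter (fun z => g <+: z), pathProd ξ z = pathProd ξ g :=
    massAux H Z hclosed hZH hreach hterm ξ hξsum n g hgH (hbnd g)
  have hmassa : ∑ z ∈ Z.filter (fun z => g ++ [a] <+: z), pathProd ξ z
      = pathProd ξ g * ξ g a := by
    rw [massAux H Z hclosed hZH hreach hterm ξ hξsum n (g ++ [a]) hme (hbnd _), pathProd_snoc]
  have hIH : ∑ z ∈ Z.filter (fun z => g ++ [a] <+: z),
      pathProd ξ z * uhatB ξ σ u H b z (g ++ [a])
        = pathProd ξ g * ξ g a * expUtil σ u Z (g ++ [a]) := by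
    rw [unbiasedAux H Z hclosed hZH hreach hterm ξ hξpos hξsum σ u b n (g ++ [a]) hme (hbnd _),
      pathProd_snoc]
  calc ∑ z ∈ Z.filter (fun z => g <+: z), pathProd ξ z * uhatBA ξ σ u H b z g a
      = ∑ z ∈ Z.filter (fun z => g <+: z),
          (pathProd ξ z * b g a +
            (if g ++ [a] <+: z then
                (pathProd ξ z * uhatB ξ σ u H b z (g ++ [a])
                  - pathProd ξ z * b g a) / ξ g a
              else 0)) := by
        refine Finset.sum_congr rfl fun z hz => ?_
        obtain ⟨hz1, hz2⟩ := Finset.mem_filter.mp hz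
        have hne : g ≠ z := fun h => hgZ (h ▸ hz1)
        unfold uhatBA
        by_cases hc : g ++ [a] <+: z
        · rw [if_pos hc, if_pos hc]; ring
        · rw [if_neg hc, if_pos ⟨hz2, hne⟩, if_neg hc, add_zero]
    _ = pathProd ξ g * b g a +
          (pathProd ξ g * ξ g a * expUtil σ u Z (g ++ [a])
            - pathProd ξ g * ξ g a * b g a) / ξ g a := by
        rw [Finset.sum_add_distrib, ← Finset.sum_mul, hmass,
          ← Finset.sum_filter, hsub, ← Finset.sum_div, Finset.sum_sub_distrib,
          hIH, ← Finset.sum_mul, hmassa]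
    _ = pathProd ξ g * expUtil σ u Z (g ++ [a]) := by field_simp; ring

end Aux

/-- **The baseline-enhanced counterfactual value estimate has the same expectation as the
original outcome-sampling estimate** (Lemma 6 in the paper): for every information set
`I` of player `i` and legal action `a` at `I`,
`E_{z∼ξ}[v̂_i^b(σ,I,a|z)] = E_{z∼ξ}[ṽ_i(σ,I,a|z)]`. -/
theorem baseline_enhanced_cfv_estimate_same_expectation
    (H Z : Finset (List A))
    (hempty : ([] : List A) ∈ H)
    (hclosed : ∀ h ∈ H, ∀ h' : List A, h' <+: h → h' ∈ H)
    (hZH : Z ⊆ H)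
    (hreach : ∀ h ∈ H, ∃ z ∈ Z, h <+: z)
    (hterm : ∀ z ∈ Z, ∀ h ∈ H, z <+: h → z = h)
    (hlegal : ∀ h ∈ H, h ∉ Z → (legal H h).Nonempty)
    (ξ : List A → A → ℝ)
    (hξpos : ∀ h ∈ H, h ∉ Z → ∀ a ∈ legal H h, 0 < ξ h a)
    (hξsum : ∀ h ∈ H, h ∉ Z → ∑ a ∈ legal H h, ξ h a = 1)
    (σ : List A → A → ℝ)
    (hσnn : ∀ h ∈ H, h ∉ Z → ∀ a ∈ legal H h, 0 ≤ σ h a)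
    (hσsum : ∀ h ∈ H, h ∉ Z → ∑ a ∈ legal H h, σ h a = 1)
    {N : Type*} [DecidableEq N] (τ : List A → N) (i : N) (u : List A → ℝ)
    (I : Finset (List A))
    (hIH : ∀ h ∈ I, h ∈ H ∧ h ∉ Z ∧ τ h = i)
    (hIact : ∀ h ∈ I, ∀ h' ∈ I, legal H h = legal H h')
    (hIanti : ∀ h ∈ I, ∀ h' ∈ I, h <+: h' → h = h')
    (b : List A → A → ℝ) (a : A) (haI : ∀ h ∈ I, a ∈ legal H h) :
    (∑ z ∈ Z, pathProd ξ z *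
        ∑ h ∈ I.filter (fun h => h <+: z),
          oppProd σ τ i h / pathProd ξ h * uhatBA ξ σ u H b z h a)
      = ∑ z ∈ Z, pathProd ξ z *
          ∑ h ∈ I.filter (fun h => h ++ [a] <+: z),
            oppProd σ τ i (h ++ [a]) * sfxProd σ (h ++ [a]) z * u z / pathProd ξ z := by
  have hq : ∀ g ∈ H, 0 < pathProd ξ g := pathProd_pos H Z hclosed hterm ξ hξpos
  have key : ∀ h ∈ I,
      (∑ z ∈ Z, if h <+: z then
          pathProd ξ z * (oppProd σ τ i h / pathProd ξ h * uhatBA ξ σ u H b z h a) else 0)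
        = oppProd σ τ i h * expUtil σ u Z (h ++ [a]) := by
    intro h hmem
    obtain ⟨hH, hZ, hi⟩ := hIH h hmem
    have ha' : a ∈ legal H h := haI h hmem
    have hne : pathProd ξ h ≠ 0 := ne_of_gt (hq h hH)
    rw [← Finset.sum_filter]
    have step : ∀ z ∈ Z.filter (fun z => h <+: z),
        pathProd ξ z * (oppProd σ τ i h / pathProd ξ h * uhatBA ξ σ u H b z h a)
          = oppProd σ τ i h / pathProd ξ h * (pathProd ξ z * uhatBA ξ σ u H b z h a) :=
      fun z _ => by ring
    rw [Finset.sum_congr rfl step, ← Finset.mul_sum,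
      sum_uhatBA H Z hclosed hZH hreach hterm ξ hξpos hξsum σ u b hH hZ ha']
    field_simp
  have key2 : ∀ h ∈ I,
      (∑ z ∈ Z, if h ++ [a] <+: z then
          pathProd ξ z * (oppProd σ τ i (h ++ [a]) * sfxProd σ (h ++ [a]) z * u z
            / pathProd ξ z) else 0)
        = oppProd σ τ i h * expUtil σ u Z (h ++ [a]) := by
    intro h hmem
    obtain ⟨hH, hZ, hi⟩ := hIH h hmem
    have hopp : oppProd σ τ i (h ++ [a]) = oppProd σ τ i h := by
      rw [oppProd_snoc, if_neg (by simp [hi]), mul_one]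
    rw [← Finset.sum_filter]
    have step : ∀ z ∈ Z.filter (fun z => h ++ [a] <+: z),
        pathProd ξ z * (oppProd σ τ i (h ++ [a]) * sfxProd σ (h ++ [a]) z * u z
            / pathProd ξ z)
          = oppProd σ τ i h * (sfxProd σ (h ++ [a]) z * u z) := by
      intro z hz
      have hzne : pathProd ξ z ≠ 0 := ne_of_gt (hq z (hZH (Finset.mem_filter.mp hz).1))
      rw [hopp]
      field_simp
    rw [Finset.sum_congr rfl step, ← Finset.mul_sum]
    rfl
  calc (∑ z ∈ Z, pathProd ξ z *
        ∑ h ∈ I.filter (fun h => h <+: z),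
          oppProd σ τ i h / pathProd ξ h * uhatBA ξ σ u H b z h a)
      = ∑ z ∈ Z, ∑ h ∈ I, (if h <+: z then
          pathProd ξ z * (oppProd σ τ i h / pathProd ξ h * uhatBA ξ σ u H b z h a) else 0) := by
        refine Finset.sum_congr rfl fun z _ => ?_
        rw [Finset.sum_filter, Finset.mul_sum]
        exact Finset.sum_congr rfl fun h _ => by rw [mul_ite, mul_zero]
    _ = ∑ h ∈ I, ∑ z ∈ Z, (if h <+: z then
          pathProd ξ z * (oppProd σ τ i h / pathProd ξ h * uhatBA ξ σ u H b z h a) else 0) :=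
        Finset.sum_comm
    _ = ∑ h ∈ I, oppProd σ τ i h * expUtil σ u Z (h ++ [a]) :=
        Finset.sum_congr rfl key
    _ = ∑ h ∈ I, ∑ z ∈ Z, (if h ++ [a] <+: z then
          pathProd ξ z * (oppProd σ τ i (h ++ [a]) * sfxProd σ (h ++ [a]) z * u z
            / pathProd ξ z) else 0) :=
        (Finset.sum_congr rfl key2).symm
    _ = ∑ z ∈ Z, ∑ h ∈ I, (if h ++ [a] <+: z then
          pathProd ξ z * (oppProd σ τ i (h ++ [a]) * sfxProd σ (h ++ [a]) z * u z
            / pathProd ξ z) else 0) :=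
        Finset.sum_comm
    _ = ∑ z ∈ Z, pathProd ξ z *
          ∑ h ∈ I.filter (fun h => h ++ [a] <+: z),
            oppProd σ τ i (h ++ [a]) * sfxProd σ (h ++ [a]) z * u z / pathProd ξ z := by
        refine Finset.sum_congr rfl fun z _ => ?_
        rw [Finset.sum_filter, Finset.mul_sum]
        exact Finset.sum_congr rfl fun h _ => by rw [mul_ite, mul_zero]
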